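/- For n ≥ 3, every word over {1,...,n} containing all permutations of length n as factors has length at least n! + (n-1)! + n - 2. -/

import Mathlib

/-- `w` is a permutation of length `n`: a word on `{1,...,n}` with each letter occurring once. -/
def IsPermWord (n : Nat) (w : List Nat) : Prop :=
  w.length = n ∧ w.Nodup ∧ ∀ x ∈ w, 1 ≤ x ∧ x ≤ n

lemma isPermWord_iff_perm (n : ℕ) (p : List ℕ) :
    IsPermWord n p ↔ p.Perm (List.range' 1 n) := by
  constructor
  · rintro ⟨hl, hd, hm⟩
    have hsub : p ⊆ List.range' 1 n := by
      intro x hx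
      have := hm x hx
      rw [List.mem_range'_1]
      omega
    exact (List.subperm_of_subset hd hsub).perm_of_length_le (by simp [hl])
  · intro h
    refine ⟨by simpa using h.length_eq, (h.nodup_iff).mpr (List.nodup_range' (s := 1) (n := n)), ?_⟩
    intro x hx
    have := List.mem_range'_1.mp (h.mem_iff.mp hx)
    omega

/-- Two consecutive full windows of a word that are both permutation words:
the later one is the rotation of the earlier one. -/
lemma win_succ_eq (w : List ℕ) (n i : ℕ) (hn : 1 ≤ n) (hi : i + 1 + n ≤ w.length)
    (hp : IsPermWord n ((w.drop i).take n)) (hq : IsPermWord n ((w.drop (i+1)).take n)) :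
    (w.drop (i+1)).take n = ((w.drop i).take n).rotate 1 := by
  have hiL : i < w.length := by omega
  set m : List ℕ := (w.drop (i+1)).take (n-1) with hm
  have h1 : (w.drop i).take n = w[i] :: m := by
    obtain ⟨k, rfl⟩ : ∃ k, n = k + 1 := ⟨n - 1, by omega⟩
    rw [List.drop_eq_getElem_cons hiL, List.take_succ_cons]
    simp [hm]
  have hlen2 : n - 1 < (w.drop (i+1)).length := by
    rw [List.length_drop]; omega
  obtain ⟨x, hx⟩ : ∃ x, (w.drop (i+1))[n-1]? = some x :=
    ⟨_, List.getElem?_eq_getElem hlen2⟩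
  have h2 : (w.drop (i+1)).take n = m ++ [x] := by
    have hne : n = (n-1) + 1 := by omega
    rw [hne, List.take_succ, hx]; rfl
  have hperm : ((w.drop i).take n).Perm ((w.drop (i+1)).take n) :=
    ((isPermWord_iff_perm n _).mp hp).trans ((isPermWord_iff_perm n _).mp hq).symm
  rw [h1, h2] at hperm
  have hperm2 : (w[i] :: m).Perm (x :: m) := hperm.trans (List.perm_append_singleton x m)
  have hxe : w[i] = x := by
    have hmem : w[i] ∈ x :: m := hperm2.mem_iff.mp List.mem_cons_self
    rcases List.mem_cons.mp hmem with h | h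
    · exact h
    · exfalso
      have hnd : (w[i] :: m).Nodup := h1 ▸ hp.2.1
      exact (List.nodup_cons.mp hnd).1 h
  rw [h2, h1, List.rotate_cons_succ, List.rotate_zero, hxe]

/-- For n ≥ 3, every n-superpermutation has length at least n! + (n-1)! + n - 2. -/
theorem superpermutation_cyclic_class_lower_bound (n : Nat) (hn : 3 ≤ n) (w : List Nat)
    (halpha : ∀ x ∈ w, 1 ≤ x ∧ x ≤ n)
    (huniv : ∀ p : List Nat, IsPermWord n p → p <:+: w) :
    n.factorial + (n - 1).factorial + n - 2 ≤ w.length := by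
  classical
  set L := w.length with hL
  set P : Finset (List ℕ) := (List.range' 1 n).permutations.toFinset with hPdef
  have hP : ∀ p : List ℕ, p ∈ P ↔ IsPermWord n p := by
    intro p
    rw [hPdef, List.mem_toFinset, List.mem_permutations, isPermWord_iff_perm]
  have hPcard : P.card = n.factorial := by
    rw [hPdef, List.toFinset_card_of_nodup (List.nodup_permutations _ (List.nodup_range' (s := 1) (n := n))),
      List.length_permutations]
    simp
  -- every permutation occurs as a window
  have hex : ∀ p : List ℕ, ∃ i, p ∈ P → (w.drop i).take n = p := by
    intro p
    by_cases hp : p ∈ P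
    · obtain ⟨s, t, hst⟩ := huniv p ((hP p).mp hp)
      refine ⟨s.length, fun _ => ?_⟩
      have hd : w.drop s.length = p ++ t := by
        rw [← hst, List.append_assoc, List.drop_left]
      rw [hd]
      have hpl : p.length = n := ((hP p).mp hp).1
      rw [← hpl, List.take_left]
    · exact ⟨0, fun h => absurd h hp⟩
  choose f hfw using hex
  -- windows fit inside the word
  have hfle : ∀ p ∈ P, f p + n ≤ L := by
    intro p hp
    have hl : ((w.drop (f p)).take n).length = n := by rw [hfw p hp]; exact ((hP p).mp hp).1
    rw [List.length_take, List.length_drop] at hl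
    omega
  set S : Finset ℕ := P.image f with hSdef
  have hScard : S.card = n.factorial := by
    rw [hSdef, Finset.card_image_of_injOn, hPcard]
    intro p hp q hq hfe
    rw [← hfw p hp, ← hfw q hq, hfe]
  -- rotations stay in P
  have hrot : ∀ p ∈ P, ∀ k, p.rotate k ∈ P := by
    intro p hp k
    rw [hP] at hp ⊢
    rw [isPermWord_iff_perm] at hp ⊢
    exact (p.rotate_perm k).trans hp
  have hplen : ∀ p ∈ P, p.length = n := fun p hp => ((hP p).mp hp).1
  -- cyclic class completion positions
  have hnpos : 0 < n := by omega
  have hDne : ∀ p : List ℕ, ((Finset.range n).image (fun k => f (p.rotate k))).Nonempty :=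
    fun p => (Finset.nonempty_range_iff.mpr (by omega)).image _
  set cmp : List ℕ → ℕ :=
    fun p => ((Finset.range n).image (fun k => f (p.rotate k))).max' (hDne p) with hcmpdef
  have hcmp_mem : ∀ p : List ℕ, ∃ k < n, f (p.rotate k) = cmp p := by
    intro p
    have h := Finset.max'_mem _ (hDne p)
    rw [Finset.mem_image] at h
    obtain ⟨k, hk, hke⟩ := h
    exact ⟨k, Finset.mem_range.mp hk, hke⟩
  have hcmp_le : ∀ p ∈ P, ∀ k, f (p.rotate k) ≤ cmp p := by
    intro p hp k
    have hmod : p.rotate (k % n) = p.rotate k := by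
      conv_lhs => rw [← hplen p hp]
      exact List.rotate_mod p k
    rw [← hmod]
    exact Finset.le_max' ((Finset.range n).image (fun j => f (p.rotate j)))
      (f (p.rotate (k % n)))
      (Finset.mem_image_of_mem _ (Finset.mem_range.mpr (Nat.mod_lt _ hnpos)))
  set C : Finset ℕ := P.image cmp with hCdef
  have hCsubS : C ⊆ S := by
    intro c hc
    rw [hCdef] at hc
    obtain ⟨p, hp, hpe⟩ := Finset.mem_image.mp hc
    obtain ⟨k, hk, hke⟩ := hcmp_mem p
    rw [hSdef]
    exact Finset.mem_image.mpr ⟨p.rotate k, hrot p hp k, by rw [hke, hpe]⟩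
  -- lower bound on the number of cyclic classes
  have hCcard : (n - 1).factorial ≤ C.card := by
    have hfib : ∀ c ∈ P.image cmp, (P.filter (fun p => cmp p = c)).card ≤ n := by
      intro c hc
      have hsub : P.filter (fun p => cmp p = c) ⊆
          (Finset.range n).image (fun k => ((w.drop c).take n).rotate k) := by
        intro p hpf
        obtain ⟨hp, hpc⟩ := Finset.mem_filter.mp hpf
        obtain ⟨k, hk, hke⟩ := hcmp_mem p
        have hwin : (w.drop c).take n = p.rotate k := by
          rw [← hpc, ← hke]; exact hfw _ (hrot p hp k)
        have e1 : (p.rotate k).rotate (n - k) = p := by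
          rw [List.rotate_rotate, show k + (n - k) = n from by omega,
            ← hplen p hp, List.rotate_length]
        have e2 : (p.rotate k).rotate ((n - k) % n) = (p.rotate k).rotate (n - k) := by
          have hlenr : (p.rotate k).length = n := by
            rw [List.length_rotate, hplen p hp]
          rw [← hlenr, List.rotate_mod]
        have hkey : ((w.drop c).take n).rotate ((n - k) % n) = p := by
          rw [hwin, e2, e1]
        exact Finset.mem_image.mpr ⟨(n - k) % n,
          Finset.mem_range.mpr (Nat.mod_lt _ hnpos), hkey⟩
      calc (P.filter (fun p => cmp p = c)).card
          ≤ ((Finset.range n).image (fun k => ((w.drop c).take n).rotate k)).card :=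
            Finset.card_le_card hsub
        _ ≤ n := le_trans Finset.card_image_le (by simp)
    have hdc := Finset.card_le_mul_card_image (f := cmp) P n hfib
    rw [hPcard] at hdc
    have hfact : n.factorial = n * (n - 1).factorial := by
      conv_lhs => rw [show n = (n - 1) + 1 by omega]
      rw [Nat.factorial_succ]
      congr 1
      omega
    rw [hfact, ← hCdef] at hdc
    exact Nat.le_of_mul_le_mul_left hdc hnpos
  have hCne : C.Nonempty := by
    rw [← Finset.card_pos]
    have := Nat.factorial_pos (n - 1)
    omega
  set cmax : ℕ := C.max' hCne with hcmax
  -- window positions ≤ L - n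
  have hSle : ∀ s ∈ S, s + n ≤ L := by
    intro s hs
    obtain ⟨p, hp, hpe⟩ := Finset.mem_image.mp hs
    rw [← hpe]; exact hfle p hp
  have hcmaxle : cmax + n ≤ L := hSle _ (hCsubS (C.max'_mem hCne))
  -- the key wasted-character lemma
  have hwaste : ∀ c ∈ C, c ≠ cmax → c + 1 ∉ S := by
    intro c hc hne hcS
    have hclt : c < cmax := lt_of_le_of_ne (Finset.le_max' _ _ hc) hne
    have hiL : c + 1 + n ≤ L := by omega
    obtain ⟨p, hp, hpe⟩ := Finset.mem_image.mp hc
    obtain ⟨k, hk, hke⟩ := hcmp_mem p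
    have hwin : (w.drop c).take n = p.rotate k := by
      rw [← hpe, ← hke]; exact hfw _ (hrot p hp k)
    obtain ⟨r, hr, hre⟩ := Finset.mem_image.mp hcS
    have hwin1 : (w.drop (c+1)).take n = r := by rw [← hre]; exact hfw r hr
    have hrotstep : (w.drop (c+1)).take n = ((w.drop c).take n).rotate 1 := by
      refine win_succ_eq w n c (by omega) hiL ?_ ?_
      · rw [hwin]; exact (hP _).mp (hrot p hp k)
      · rw [hwin1]; exact (hP r).mp hr
    have hreq : r = p.rotate (k + 1) := by
      rw [← hwin1, hrotstep, hwin, List.rotate_rotate]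
    have : f r ≤ c := by
      rw [hreq, ← hpe]
      exact hcmp_le p hp (k + 1)
    omega
  -- assemble the counting
  set T : Finset ℕ := (C.erase cmax).image (· + 1) with hTdef
  have hTcard : C.card - 1 ≤ T.card := by
    rw [hTdef, Finset.card_image_of_injective _ (add_left_injective 1),
      Finset.card_erase_of_mem (C.max'_mem hCne)]
  have hdisj : Disjoint S T := by
    rw [Finset.disjoint_right]
    intro t ht hts
    obtain ⟨c, hc, hce⟩ := Finset.mem_image.mp ht
    obtain ⟨hcne, hcC⟩ := Finset.mem_erase.mp hc
    exact hwaste c hcC hcne (hce ▸ hts)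
  have hsub : S ∪ T ⊆ Finset.range (L - n + 1) := by
    intro x hx
    rw [Finset.mem_range]
    rcases Finset.mem_union.mp hx with hx | hx
    · have := hSle x hx; omega
    · obtain ⟨c, hc, hce⟩ := Finset.mem_image.mp hx
      obtain ⟨hcne, hcC⟩ := Finset.mem_erase.mp hc
      have hclt : c < cmax := lt_of_le_of_ne (Finset.le_max' _ _ hcC) hcne
      omega
  have hcount : S.card + T.card ≤ L - n + 1 := by
    rw [← Finset.card_union_of_disjoint hdisj]
    calc (S ∪ T).card ≤ (Finset.range (L - n + 1)).card := Finset.card_le_card hsub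
      _ = L - n + 1 := Finset.card_range _
  have hLn : n ≤ L := by
    have := Nat.factorial_pos n
    have hSne : S.Nonempty := by rw [← Finset.card_pos, hScard]; omega
    obtain ⟨s, hs⟩ := hSne
    have := hSle s hs
    omega
  have h1 : 1 ≤ (n - 1).factorial := Nat.factorial_pos _
  rw [hScard] at hcount
  omega
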